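/- Let D ≻ 0 be a d×d positive definite real matrix, c > 0, and x ∈ ℝ^d. Define D' = (I + c⁻¹D)⁻¹ and D₊ = (D⁻¹ + c⁻¹I)⁻¹ + xxᵀ. Then the matrix D' D₊⁻¹ x xᵀ D₊⁻¹ D' + D'(D₊⁻¹ D' + c⁻¹I) − D⁻¹ is negative semidefinite; in fact it equals −(xᵀ(D⁻¹+c⁻¹I)x) · (D⁻¹ x xᵀ D⁻¹) / (1 + xᵀ(D⁻¹+c⁻¹I)x)². -/

import Mathlib

open Matrix

variable {d : ℕ}

private lemma L1 (M : Matrix (Fin d) (Fin d) ℝ) (u v : Fin d → ℝ) :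
    M * vecMulVec u v = vecMulVec (M *ᵥ u) v := by
  ext i j
  simp [mul_apply, vecMulVec_apply, mulVec, dotProduct, Finset.sum_mul, mul_assoc]

private lemma L2 (M : Matrix (Fin d) (Fin d) ℝ) (u v : Fin d → ℝ) :
    vecMulVec u v * M = vecMulVec u (v ᵥ* M) := by
  ext i j
  simp [mul_apply, vecMulVec_apply, vecMul, dotProduct, Finset.mul_sum, mul_assoc]

private lemma L4 (u v z : Fin d → ℝ) : vecMulVec u v *ᵥ z = (v ⬝ᵥ z) • u := by
  ext i
  simp [mulVec, vecMulVec_apply, dotProduct, Finset.mul_sum, Finset.sum_mul, mul_assoc,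
    mul_comm, mul_left_comm]

private lemma L4' (u v z : Fin d → ℝ) : z ᵥ* vecMulVec u v = (z ⬝ᵥ u) • v := by
  ext j
  simp [vecMul, vecMulVec_apply, dotProduct, Finset.sum_mul, mul_assoc]

private lemma Lsmul2 (a : ℝ) (u v : Fin d → ℝ) : vecMulVec u (a • v) = a • vecMulVec u v := by
  ext i j; simp [vecMulVec_apply]; ring

private lemma L5 (a : ℝ) (ha : 0 ≤ a) (y : Fin d → ℝ) :
    (a • vecMulVec y y).PosSemidef := by
  rw [posSemidef_iff_dotProduct_mulVec]
  constructor
  · show _ = _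
    ext i j
    simp [conjTranspose_apply, vecMulVec_apply, mul_comm]
  · intro z
    rw [smul_mulVec, L4]
    simp only [star_trivial, dotProduct_smul, smul_eq_mul, dotProduct_comm z y]
    have := mul_nonneg ha (mul_self_nonneg (y ⬝ᵥ z))
    simpa [mul_assoc] using this

theorem stmt_3 (d : ℕ) (c : ℝ) (hc : 0 < c)
    (D : Matrix (Fin d) (Fin d) ℝ) (hD : D.PosDef) (x : Fin d → ℝ)
    (D' Dplus : Matrix (Fin d) (Fin d) ℝ)
    (hD' : D' = ((1 : Matrix (Fin d) (Fin d) ℝ) + c⁻¹ • D)⁻¹)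
    (hDplus : Dplus = (D⁻¹ + c⁻¹ • (1 : Matrix (Fin d) (Fin d) ℝ))⁻¹ + vecMulVec x x) :
    (-(D' * Dplus⁻¹ * vecMulVec x x * Dplus⁻¹ * D'
        + D' * (Dplus⁻¹ * D' + c⁻¹ • (1 : Matrix (Fin d) (Fin d) ℝ)) - D⁻¹)).PosSemidef
    ∧ D' * Dplus⁻¹ * vecMulVec x x * Dplus⁻¹ * D'
        + D' * (Dplus⁻¹ * D' + c⁻¹ • (1 : Matrix (Fin d) (Fin d) ℝ)) - D⁻¹
      = -((x ⬝ᵥ ((D⁻¹ + c⁻¹ • (1 : Matrix (Fin d) (Fin d) ℝ)) *ᵥ x))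
            / (1 + x ⬝ᵥ ((D⁻¹ + c⁻¹ • (1 : Matrix (Fin d) (Fin d) ℝ)) *ᵥ x)) ^ 2)
          • (D⁻¹ * vecMulVec x x * D⁻¹) := by
  set A := D⁻¹ + c⁻¹ • (1 : Matrix (Fin d) (Fin d) ℝ) with hAdef
  set X := vecMulVec x x with hXdef
  -- positive definiteness facts
  have hone : (c⁻¹ • (1 : Matrix (Fin d) (Fin d) ℝ)).PosDef := by
    refine posDef_iff_dotProduct_mulVec.mpr ⟨?_, fun z hz => ?_⟩
    · show _ = _
      simp
    · have hz' : 0 < z ⬝ᵥ z := by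
        have := dotProduct_star_self_pos_iff (v := z) |>.mpr hz
        simpa using this
      have heq : (star z) ⬝ᵥ ((c⁻¹ • (1 : Matrix (Fin d) (Fin d) ℝ)) *ᵥ z) = c⁻¹ * (z ⬝ᵥ z) := by
        simp [smul_mulVec, star_trivial]
      rw [heq]
      exact mul_pos (inv_pos.mpr hc) hz'
  have hApd : A.PosDef := hD.inv.add hone
  haveI := hApd.isUnit.invertible
  haveI := hD.isUnit.invertible
  have hBA : A⁻¹ * A = 1 := inv_mul_of_invertible A
  have hAB : A * A⁻¹ = 1 := mul_inv_of_invertible A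
  have hDE : D * D⁻¹ = 1 := mul_inv_of_invertible D
  -- D' = A⁻¹ * D⁻¹
  have hfact : (1 : Matrix (Fin d) (Fin d) ℝ) + c⁻¹ • D = D * A := by
    rw [hAdef, mul_add, hDE, mul_smul_comm, mul_one]
  have hD'' : D' = A⁻¹ * D⁻¹ := by rw [hD', hfact, Matrix.mul_inv_rev]
  -- commutation
  have hEA : D⁻¹ * A = A * D⁻¹ := by
    rw [hAdef, mul_add, add_mul, mul_smul_comm, smul_mul_assoc, mul_one, one_mul]
  have hABl : ∀ Z : Matrix (Fin d) (Fin d) ℝ, A * (A⁻¹ * Z) = Z := fun Z => by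
    rw [← mul_assoc, hAB, one_mul]
  have hBAl : ∀ Z : Matrix (Fin d) (Fin d) ℝ, A⁻¹ * (A * Z) = Z := fun Z => by
    rw [← mul_assoc, hBA, one_mul]
  have hEAl : ∀ Z : Matrix (Fin d) (Fin d) ℝ, D⁻¹ * (A * Z) = A * (D⁻¹ * Z) := fun Z => by
    rw [← mul_assoc, hEA, mul_assoc]
  -- scalars
  set s := x ⬝ᵥ A *ᵥ x with hs_def
  have hs0 : 0 ≤ s := by simpa using hApd.posSemidef.dotProduct_mulVec_nonneg x
  set t := 1 + s with ht_def
  have htpos : 0 < t := by linarith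
  have ht0 : t ≠ 0 := htpos.ne'
  set M := A - t⁻¹ • (A * (X * A)) with hMdef
  -- Sherman–Morrison
  have hw : (x ᵥ* A) ⬝ᵥ x = s := (dotProduct_mulVec x A x).symm
  have e1 : X * A = vecMulVec x (x ᵥ* A) := L2 A x x
  have e2 : (X * A) * (X * A) = s • (X * A) := by
    rw [e1, L2, L4', hw, Lsmul2]
  have e3 : (X * A) * X = s • X := by
    rw [e1, hXdef, L2, L4', hw, Lsmul2]
  have key : Dplus * M = 1 := by
    have c1 : A⁻¹ * (A * (X * A)) = X * A := hBAl _
    have c2 : X * (A * (X * A)) = s • (X * A) := by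
      rw [← mul_assoc, e2]
    calc Dplus * M
        = A⁻¹ * A + X * A - (t⁻¹ • (A⁻¹ * (A * (X * A))) + t⁻¹ • (X * (A * (X * A)))) := by
          rw [hDplus, hMdef, add_mul, mul_sub, mul_sub, mul_smul_comm, mul_smul_comm]
          abel
      _ = 1 + X * A - (t⁻¹ • (X * A) + (t⁻¹ * s) • (X * A)) := by
          rw [hBA, c1, c2, smul_smul]
      _ = 1 + (1 - (t⁻¹ + t⁻¹ * s)) • (X * A) := by
          rw [sub_smul, add_smul, one_smul]; abel
      _ = 1 := by
          have hz : 1 - (t⁻¹ + t⁻¹ * s) = 0 := by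
            field_simp
            rw [ht_def]; ring
          rw [hz, zero_smul, add_zero]
  have hDinv : Dplus⁻¹ = M := inv_eq_right_inv key
  -- products with D'
  have hD'A : (A⁻¹ * D⁻¹) * A = D⁻¹ := by
    rw [mul_assoc, hEA, ← mul_assoc, hBA, one_mul]
  have hD'M : D' * M = D⁻¹ - t⁻¹ • (D⁻¹ * (X * A)) := by
    rw [hD'', hMdef, mul_sub, mul_smul_comm, ← mul_assoc (A⁻¹ * D⁻¹) A (X * A), hD'A]
  have hMD' : M * D' = D⁻¹ - t⁻¹ • ((A * X) * D⁻¹) := by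
    rw [hD'', hMdef, sub_mul, smul_mul_assoc,
      mul_assoc A (X * A) (A⁻¹ * D⁻¹), mul_assoc X A (A⁻¹ * D⁻¹), hABl, ← mul_assoc A X D⁻¹]
  -- scalar simplification 1 - t⁻¹ * s = t⁻¹
  have hscal : 1 - t⁻¹ * s = t⁻¹ := by
    field_simp
    linarith
  have hcollect : ∀ Y : Matrix (Fin d) (Fin d) ℝ, Y - (t⁻¹ * s) • Y = t⁻¹ • Y := by
    intro Y
    nth_rewrite 1 [← one_smul ℝ Y]
    rw [← sub_smul, hscal]
  -- Term 1
  have hT1a : (D' * M) * X = t⁻¹ • (D⁻¹ * X) := by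
    rw [hD'M, sub_mul, smul_mul_assoc, mul_assoc D⁻¹ (X * A) X, e3, mul_smul_comm,
      smul_smul]
    exact hcollect _
  have hT1b : X * (M * D') = t⁻¹ • (X * D⁻¹) := by
    rw [hMD', mul_sub, mul_smul_comm, ← mul_assoc X (A * X) D⁻¹, ← mul_assoc X A X, e3,
      smul_mul_assoc, smul_smul]
    exact hcollect _
  have hT1 : ((D' * M) * X) * (M * D') = (t⁻¹ * t⁻¹) • (D⁻¹ * X * D⁻¹) := by
    rw [hT1a, smul_mul_assoc, mul_assoc D⁻¹ X (M * D'), hT1b, mul_smul_comm, smul_smul,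
      ← mul_assoc]
  -- Term 2
  have hsum : A⁻¹ * (D⁻¹ * D⁻¹) + c⁻¹ • (A⁻¹ * D⁻¹) = D⁻¹ := by
    have h1 : D⁻¹ * D⁻¹ + c⁻¹ • D⁻¹ = D⁻¹ * A := by
      rw [hAdef, mul_add, mul_smul_comm, mul_one]
    calc A⁻¹ * (D⁻¹ * D⁻¹) + c⁻¹ • (A⁻¹ * D⁻¹)
        = A⁻¹ * (D⁻¹ * D⁻¹ + c⁻¹ • D⁻¹) := by rw [mul_add, mul_smul_comm]
      _ = A⁻¹ * (A * D⁻¹) := by rw [h1, hEA]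
      _ = D⁻¹ := hBAl _
  have hT2 : D' * (M * D' + c⁻¹ • (1 : Matrix (Fin d) (Fin d) ℝ))
      = D⁻¹ - t⁻¹ • (D⁻¹ * X * D⁻¹) := by
    have h2 : D' * ((A * X) * D⁻¹) = D⁻¹ * X * D⁻¹ := by
      rw [hD'', mul_assoc A X D⁻¹, ← mul_assoc (A⁻¹ * D⁻¹) A (X * D⁻¹), hD'A, ← mul_assoc]
    have h3 : D' * D⁻¹ + c⁻¹ • D' = D⁻¹ := by
      rw [hD'', mul_assoc]; exact hsum
    calc D' * (M * D' + c⁻¹ • (1 : Matrix (Fin d) (Fin d) ℝ))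
        = D' * (M * D') + c⁻¹ • D' := by
          rw [mul_add, mul_smul_comm, mul_one]
      _ = D' * D⁻¹ - t⁻¹ • (D' * ((A * X) * D⁻¹)) + c⁻¹ • D' := by
          rw [hMD', mul_sub, mul_smul_comm]
      _ = (D' * D⁻¹ + c⁻¹ • D') - t⁻¹ • (D⁻¹ * X * D⁻¹) := by rw [h2]; abel
      _ = D⁻¹ - t⁻¹ • (D⁻¹ * X * D⁻¹) := by rw [h3]
  -- the main equality
  have hmain : D' * Dplus⁻¹ * X * Dplus⁻¹ * D'
        + D' * (Dplus⁻¹ * D' + c⁻¹ • (1 : Matrix (Fin d) (Fin d) ℝ)) - D⁻¹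
      = (t⁻¹ * t⁻¹ - t⁻¹) • (D⁻¹ * X * D⁻¹) := by
    rw [hDinv]
    have hassoc : D' * M * X * M * D' = ((D' * M) * X) * (M * D') := by
      simp only [mul_assoc]
    rw [hassoc, hT1, hT2, sub_smul]
    abel
  have hscal2 : t⁻¹ * t⁻¹ - t⁻¹ = -(s / t ^ 2) := by
    have hst : s = t - 1 := by rw [ht_def]; ring
    have h2 : t ^ 2 ≠ 0 := pow_ne_zero 2 ht0
    have h3 : t⁻¹ * t = 1 := inv_mul_cancel₀ ht0
    rw [hst, ← neg_div, neg_sub, eq_div_iff h2]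
    linear_combination (t⁻¹ * t + 1 - t) * h3
  constructor
  · rw [hmain, hscal2, neg_smul, neg_neg]
    have hy : D⁻¹ * X * D⁻¹ = vecMulVec (D⁻¹ *ᵥ x) (D⁻¹ *ᵥ x) := by
      have hEt : (D⁻¹)ᵀ = D⁻¹ := by
        rw [← conjTranspose_eq_transpose_of_trivial]
        exact hD.inv.isHermitian
      rw [hXdef, L1, L2, ← hEt, vecMul_transpose, hEt]
    rw [hy]
    exact L5 _ (div_nonneg hs0 (sq_nonneg t)) _
  · rw [hmain, hscal2]
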